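/- Let K/F be a finite Galois extension of fields with Galois group G, and let S be a G-set possessing a G-fixed point s₀ ∈ S. Let ℤ[S]₀ denote the kernel of the augmentation map from the free abelian group ℤ[S] on S to ℤ, and let M = Hom(ℤ[S]₀, Kˣ) be the group of homomorphisms from the additive group ℤ[S]₀ to the multiplicative group Kˣ, with G acting by (σ•f)(x) = σ(f(σ⁻¹•x)). Then every multiplicative 1-cocycle of G in M is a 1-coboundary: if c : G → M satisfies c(στ) = c(σ)·(σ•c(τ)) for all σ, τ ∈ G, then there exists f ∈ M with c(σ) = (σ•f)·f⁻¹ for all σ ∈ G. -/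

import Mathlib

/-- The augmentation map `ℤ[S] → ℤ`, `∑ n_s · s ↦ ∑ n_s`. -/
noncomputable def aug (S : Type*) : (S →₀ ℤ) →+ ℤ :=
  Finsupp.liftAddHom fun _ => AddMonoidHom.id ℤ

/-- The action of `g : G` on `ℤ[S]`, permuting the basis elements. -/
noncomputable def permHom {G : Type*} [Group G] {S : Type*} [MulAction G S]
    (g : G) : (S →₀ ℤ) →+ (S →₀ ℤ) :=
  Finsupp.mapDomain.addMonoidHom (fun s => g • s)

lemma aug_permHom {G : Type*} [Group G] {S : Type*} [MulAction G S] (g : G) (x : S →₀ ℤ) :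
    aug S (permHom g x) = aug S x := by
  have h : (aug S).comp (permHom (G := G) (S := S) g) = aug S := by
    apply Finsupp.addHom_ext
    intro s n
    simp [aug, permHom, Finsupp.mapDomain.addMonoidHom, Finsupp.mapDomain_single]
  exact DFunLike.congr_fun h x

/-- The action of `g : G` on `ℤ[S]₀ = ker(aug)`. -/
noncomputable def permHom0 {G : Type*} [Group G] {S : Type*} [MulAction G S]
    (g : G) : ↥(aug S).ker →+ ↥(aug S).ker :=
  AddMonoidHom.codRestrict ((permHom g).comp (aug S).ker.subtype) (aug S).ker
    (fun x => by
      have hx : aug S (x : S →₀ ℤ) = 0 := AddMonoidHom.mem_ker.mp x.2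
      simpa [AddMonoidHom.mem_ker, aug_permHom] using hx)

/-- Vanishing of `H¹(Gal(K/F), Hom(ℤ[S]₀, Kˣ))` for a finite Galois extension `K/F` and
a `Gal(K/F)`-set `S` with a fixed point `s₀` (Lemma "LocWorksWell(1)"): every `1`-cocycle
valued in the group of homomorphisms `ℤ[S]₀ → Kˣ` is a `1`-coboundary. -/
-- ## auxiliary lemmas

lemma hilbert90_sub {F K : Type*} [Field F] [Field K] [Algebra F K] [FiniteDimensional F K]
    (H : Subgroup (K ≃ₐ[F] K)) (d : H → Kˣ)
    (hd : ∀ σ τ : H, d (σ * τ) = d σ * Units.map ((σ : K ≃ₐ[F] K) : K →* K) (d τ)) :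
    ∃ b : Kˣ, ∀ h : H, d h = Units.map ((h : K ≃ₐ[F] K) : K →* K) b * b⁻¹ := by
  haveI : Fintype H := Fintype.ofFinite H
  have lin : LinearIndependent K (fun (h : H) => (((h : K ≃ₐ[F] K) : K →* K) : K → K)) :=
    LinearIndependent.comp (linearIndependent_monoidHom K K)
      (fun h : H => ((h : K ≃ₐ[F] K) : K →* K))
      (fun x y hxy => by
        apply Subtype.ext
        ext z
        exact DFunLike.congr_fun hxy z)
  set φ : K → K := fun z => ∑ h : H, (d h : K) * (h : K ≃ₐ[F] K) z with hφ
  have hne : φ ≠ 0 := by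
    intro h0
    have h := linearIndependent_iff.1 lin
      (Finsupp.equivFunOnFinite.symm (fun h : H => (d h : K)))
    have : (Finsupp.equivFunOnFinite.symm (fun h : H => (d h : K))) = 0 := by
      apply h
      rw [Finsupp.linearCombination_apply, Finsupp.sum_fintype]
      · ext z
        have := congrFun h0 z
        simpa [hφ, Finset.sum_apply] using this
      · intro i; simp
    exact Units.ne_zero (d 1) (by simpa using DFunLike.congr_fun this 1)
  obtain ⟨z, hz⟩ : ∃ z, φ z ≠ 0 := by
    by_contra hall
    push_neg at hall
    exact hne (funext fun z => hall z)
  set β : Kˣ := Units.mk0 (φ z) hz with hβ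
  have hσβ : ∀ σ : H, (σ : K ≃ₐ[F] K) (φ z) = (d σ : K)⁻¹ * φ z := by
    intro σ
    have : (σ : K ≃ₐ[F] K) (φ z)
        = ∑ h : H, ((σ : K ≃ₐ[F] K) (d h : K)) * ((σ * h : H) : K ≃ₐ[F] K) z := by
      simp [hφ, map_sum, map_mul, Subgroup.coe_mul, AlgEquiv.mul_apply]
    rw [this]
    have key : ∀ h : H, ((σ : K ≃ₐ[F] K) (d h : K)) = (d σ : K)⁻¹ * (d (σ * h) : K) := by
      intro h
      have : (d (σ * h) : K) = (d σ : K) * (σ : K ≃ₐ[F] K) (d h : K) := by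
        rw [hd σ h]; simp [Units.val_mul, Units.coe_map]
      rw [this, inv_mul_cancel_left₀ (Units.ne_zero _)]
    simp_rw [key, mul_assoc, ← Finset.mul_sum]
    congr 1
    rw [hφ]
    exact Fintype.sum_bijective (fun h => σ * h) (Group.mulLeft_bijective σ) _ _ (fun h => rfl)
  refine ⟨β⁻¹, fun h => ?_⟩
  have := hσβ h
  apply Units.ext
  simp only [Units.val_mul, Units.coe_map, MonoidHom.coe_coe, map_inv, Units.val_inv_eq_inv_val,
    inv_inv, hβ, Units.val_mk0]
  rw [this]
  field_simp

lemma aug_single {S : Type*} (s : S) (n : ℤ) : aug S (Finsupp.single s n) = n := by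
  simp [aug]

/-- `e s = s - s₀` in `ℤ[S]`. -/
noncomputable def eElt {S : Type*} (s₀ s : S) : S →₀ ℤ :=
  Finsupp.single s 1 - Finsupp.single s₀ 1

lemma eElt_mem {S : Type*} (s₀ s : S) : eElt s₀ s ∈ (aug S).ker := by
  simp [AddMonoidHom.mem_ker, eElt, map_sub, aug_single]

/-- `e s = s - s₀` as an element of `ℤ[S]₀`. -/
noncomputable def EElt {S : Type*} (s₀ s : S) : ↥(aug S).ker := ⟨eElt s₀ s, eElt_mem s₀ s⟩

lemma EElt_self {S : Type*} (s₀ : S) : EElt s₀ s₀ = 0 := by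
  apply Subtype.ext
  simp [EElt, eElt]

lemma permHom0_EElt {G : Type*} [Group G] {S : Type*} [MulAction G S] (g : G) (s₀ s : S)
    (h : g • s₀ = s₀) : permHom0 g (EElt s₀ s) = EElt s₀ (g • s) := by
  apply Subtype.ext
  show permHom g (eElt s₀ s) = eElt s₀ (g • s)
  simp [eElt, permHom, Finsupp.mapDomain.addMonoidHom, map_sub, Finsupp.mapDomain_single, h]

/-- The projection `ℤ[S] → ℤ[S]₀`, `x ↦ x - aug(x)·s₀`. -/
noncomputable def projP (S : Type*) (s₀ : S) : (S →₀ ℤ) →+ ↥(aug S).ker :=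
  AddMonoidHom.codRestrict (AddMonoidHom.id _ - (Finsupp.singleAddHom s₀).comp (aug S))
    (aug S).ker
    (fun x => by
      simp [AddMonoidHom.mem_ker, map_sub, aug_single])

lemma projP_coe {S : Type*} (s₀ : S) (x : S →₀ ℤ) :
    ((projP S s₀ x : ↥(aug S).ker) : S →₀ ℤ) = x - Finsupp.single s₀ (aug S x) := rfl

lemma projP_ker {S : Type*} (s₀ : S) (x : ↥(aug S).ker) : projP S s₀ (x : S →₀ ℤ) = x := by
  apply Subtype.ext
  rw [projP_coe, AddMonoidHom.mem_ker.mp x.2]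
  simp

lemma projP_single {S : Type*} (s₀ s : S) (n : ℤ) :
    projP S s₀ (Finsupp.single s n) = n • EElt s₀ s := by
  apply Subtype.ext
  rw [projP_coe, aug_single]
  show _ = n • eElt s₀ s
  simp [eElt, smul_sub, Finsupp.smul_single]


/-- Vanishing of `H¹(Gal(K/F), Hom(ℤ[S]₀, Kˣ))` for a finite Galois extension `K/F` and
a `Gal(K/F)`-set `S` with a fixed point `s₀` (Lemma "LocWorksWell(1)"): every `1`-cocycle
valued in the group of homomorphisms `ℤ[S]₀ → Kˣ` is a `1`-coboundary. -/
theorem stmt16 {F K : Type*} [Field F] [Field K] [Algebra F K]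
    [FiniteDimensional F K] [IsGalois F K]
    {S : Type*} [MulAction (K ≃ₐ[F] K) S]
    (s₀ : S) (hs₀ : ∀ σ : K ≃ₐ[F] K, σ • s₀ = s₀)
    (c : (K ≃ₐ[F] K) → (↥(aug S).ker → Kˣ))
    (hhom : ∀ (σ : K ≃ₐ[F] K) (x y : ↥(aug S).ker), c σ (x + y) = c σ x * c σ y)
    (hc : ∀ (σ τ : K ≃ₐ[F] K) (x : ↥(aug S).ker),
        c (σ * τ) x = c σ x * Units.map (σ : K →* K) (c τ (permHom0 σ⁻¹ x))) :
    ∃ f : ↥(aug S).ker → Kˣ,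
      (∀ x y : ↥(aug S).ker, f (x + y) = f x * f y) ∧
      ∀ (σ : K ≃ₐ[F] K) (x : ↥(aug S).ker),
        c σ x = Units.map (σ : K →* K) (f (permHom0 σ⁻¹ x)) * (f x)⁻¹ := by
  classical
  -- the cocycle on basis elements
  have dcoc : ∀ (σ τ : K ≃ₐ[F] K) (s : S),
      c (σ * τ) (EElt s₀ s) = c σ (EElt s₀ s) *
        Units.map (σ : K →* K) (c τ (EElt s₀ (σ⁻¹ • s))) := by
    intro σ τ s
    have := hc σ τ (EElt s₀ s)
    rwa [permHom0_EElt σ⁻¹ s₀ s (hs₀ σ⁻¹)] at this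
  have c_zero : ∀ σ : K ≃ₐ[F] K, c σ 0 = 1 := by
    intro σ
    have := hhom σ 0 0
    rw [add_zero] at this
    exact (left_eq_mul.mp this)
  -- orbit representatives
  let rep : S → S := fun s => (Quotient.mk (MulAction.orbitRel (K ≃ₐ[F] K) S) s).out
  have hrep_smul : ∀ (γ : K ≃ₐ[F] K) (s : S), rep (γ • s) = rep s := by
    intro γ s
    show (Quotient.mk _ (γ • s)).out = (Quotient.mk _ s).out
    congr 1
    exact Quotient.sound ⟨γ, rfl⟩
  have hrep_orbit : ∀ s : S, ∃ γ : K ≃ₐ[F] K, γ • rep s = s := by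
    intro s
    have h0 := @Quotient.mk_out _ (MulAction.orbitRel (K ≃ₐ[F] K) S) s
    rw [MulAction.orbitRel_apply] at h0
    obtain ⟨γ, hγ⟩ := h0
    exact ⟨γ⁻¹, by rw [show rep s = γ • s from hγ.symm]; simp⟩
  -- Hilbert 90 on each stabilizer
  have hilb : ∀ t : S, ∃ b : Kˣ, ∀ h : K ≃ₐ[F] K, h • t = t →
      c h (EElt s₀ t) = Units.map (h : K →* K) b * b⁻¹ := by
    intro t
    obtain ⟨b, hb⟩ := hilbert90_sub (MulAction.stabilizer (K ≃ₐ[F] K) t)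
      (fun h => c (h : K ≃ₐ[F] K) (EElt s₀ t))
      (by
        intro σ τ
        have hστ : ((σ : K ≃ₐ[F] K))⁻¹ • t = t := by
          rw [inv_smul_eq_iff]; exact σ.2.symm
        have := dcoc (σ : K ≃ₐ[F] K) (τ : K ≃ₐ[F] K) t
        rw [hστ] at this
        exact this)
    exact ⟨b, fun h hh => hb ⟨h, hh⟩⟩
  choose b0 hb0 using hilb
  choose gg hgg using hrep_orbit
  -- the function u on S, and the key identity
  obtain ⟨u, key⟩ : ∃ u : S → Kˣ, ∀ (σ : K ≃ₐ[F] K) (s : S),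
      c σ (EElt s₀ s) = Units.map (σ : K →* K) (u (σ⁻¹ • s)) * (u s)⁻¹ := by
    refine ⟨fun s => (c (gg s) (EElt s₀ s))⁻¹ * Units.map (gg s : K →* K) (b0 (rep s)), ?_⟩
    have indep : ∀ (s : S) (γ₁ γ₂ : K ≃ₐ[F] K), γ₁ • rep s = s → γ₂ • rep s = s →
        (c γ₁ (EElt s₀ s))⁻¹ * Units.map (γ₁ : K →* K) (b0 (rep s))
          = (c γ₂ (EElt s₀ s))⁻¹ * Units.map (γ₂ : K →* K) (b0 (rep s)) := by
      intro s γ₁ γ₂ h₁ h₂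
      set h : K ≃ₐ[F] K := γ₂⁻¹ * γ₁ with hh
      have hmem : h • rep s = rep s := by
        rw [hh, mul_smul, h₁, inv_smul_eq_iff, h₂]
      have hγeq : γ₁ = γ₂ * h := by rw [hh, mul_inv_cancel_left]
      have hinv : γ₂⁻¹ • s = rep s := by rw [inv_smul_eq_iff, h₂]
      have e1 : c γ₁ (EElt s₀ s) = c γ₂ (EElt s₀ s) *
          Units.map (γ₂ : K →* K) (c h (EElt s₀ (rep s))) := by
        rw [hγeq]
        have := dcoc γ₂ h s
        rwa [hinv] at this
      have e3 : c h (EElt s₀ (rep s)) = Units.map (h : K →* K) (b0 (rep s)) * (b0 (rep s))⁻¹ :=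
        hb0 (rep s) h hmem
      have e4 : Units.map (γ₁ : K →* K) (b0 (rep s))
          = Units.map (γ₂ : K →* K) (Units.map (h : K →* K) (b0 (rep s))) := by
        rw [hγeq]; rfl
      rw [e1, e3, e4]
      apply Units.ext
      simp only [Units.val_mul, Units.coe_map, MonoidHom.coe_coe, map_mul, map_inv,
        Units.val_inv_eq_inv_val, mul_inv_rev]
      field_simp
    intro σ s
    have h1 : rep (σ⁻¹ • s) = rep s := hrep_smul σ⁻¹ s
    have h2 : (σ⁻¹ * gg s) • rep (σ⁻¹ • s) = σ⁻¹ • s := by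
      rw [h1, mul_smul, hgg s]
    have h3 : (c (gg (σ⁻¹ • s)) (EElt s₀ (σ⁻¹ • s)))⁻¹ *
          Units.map ((gg (σ⁻¹ • s)) : K →* K) (b0 (rep (σ⁻¹ • s)))
        = (c (σ⁻¹ * gg s) (EElt s₀ (σ⁻¹ • s)))⁻¹ *
          Units.map ((σ⁻¹ * gg s : K ≃ₐ[F] K) : K →* K) (b0 (rep (σ⁻¹ • s))) :=
      indep (σ⁻¹ • s) (gg (σ⁻¹ • s)) (σ⁻¹ * gg s) (hgg (σ⁻¹ • s)) h2
    show c σ (EElt s₀ s) = Units.map (σ : K →* K)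
        ((c (gg (σ⁻¹ • s)) (EElt s₀ (σ⁻¹ • s)))⁻¹ *
          Units.map ((gg (σ⁻¹ • s)) : K →* K) (b0 (rep (σ⁻¹ • s)))) *
        ((c (gg s) (EElt s₀ s))⁻¹ * Units.map (gg s : K →* K) (b0 (rep s)))⁻¹
    rw [h3, h1]
    -- cocycle relating c (gg s) and c σ
    have e2 : c (gg s) (EElt s₀ s) = c σ (EElt s₀ s) *
        Units.map (σ : K →* K) (c (σ⁻¹ * gg s) (EElt s₀ (σ⁻¹ • s))) := by
      have := dcoc σ (σ⁻¹ * gg s) s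
      rwa [mul_inv_cancel_left] at this
    have e5 : Units.map (σ : K →* K)
          (Units.map ((σ⁻¹ * gg s : K ≃ₐ[F] K) : K →* K) (b0 (rep s)))
        = Units.map ((gg s) : K →* K) (b0 (rep s)) := by
      have : σ * (σ⁻¹ * gg s) = gg s := by rw [mul_inv_cancel_left]
      rw [show Units.map ((gg s) : K →* K) (b0 (rep s))
          = Units.map ((σ * (σ⁻¹ * gg s) : K ≃ₐ[F] K) : K →* K) (b0 (rep s)) by rw [this]]
      rfl
    rw [map_mul, map_inv, e5]
    apply Units.ext
    rw [e2]
    simp only [Units.val_mul, Units.coe_map, MonoidHom.coe_coe, map_mul, map_inv,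
      Units.val_inv_eq_inv_val, mul_inv_rev, inv_inv]
    field_simp
  -- u s₀ is fixed
  have hus₀ : ∀ σ : K ≃ₐ[F] K, Units.map (σ : K →* K) (u s₀) = u s₀ := by
    intro σ
    have := key σ s₀
    rw [hs₀ σ⁻¹, EElt_self, c_zero] at this
    have := this.symm
    rwa [mul_inv_eq_one] at this
  -- build f
  let Uhom : (S →₀ ℤ) →+ Additive Kˣ :=
    Finsupp.liftAddHom (fun s => zmultiplesHom (Additive Kˣ) (Additive.ofMul (u s)))
  let f : ↥(aug S).ker → Kˣ := fun x => Additive.toMul (Uhom (x : S →₀ ℤ))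
  have fhom : ∀ x y : ↥(aug S).ker, f (x + y) = f x * f y := by
    intro x y
    show Additive.toMul (Uhom ((x + y : ↥(aug S).ker) : S →₀ ℤ)) = _
    rw [AddSubgroup.coe_add, map_add]
    rfl
  have fE : ∀ s : S, f (EElt s₀ s) = u s * (u s₀)⁻¹ := by
    intro s
    show Additive.toMul (Uhom (eElt s₀ s)) = _
    rw [eElt, map_sub, Finsupp.liftAddHom_apply_single, Finsupp.liftAddHom_apply_single]
    simp [zmultiplesHom, div_eq_mul_inv]
  have fzsmul : ∀ (n : ℤ) (x : ↥(aug S).ker), f (n • x) = f x ^ n := by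
    intro n x
    show Additive.toMul (Uhom ((n • x : ↥(aug S).ker) : S →₀ ℤ)) = _
    rw [show ((n • x : ↥(aug S).ker) : S →₀ ℤ) = n • (x : S →₀ ℤ) from rfl, map_zsmul]
    simp
    rfl
  -- pointwise identity at basis elements
  have hxE : ∀ (σ : K ≃ₐ[F] K) (s : S), c σ (EElt s₀ s)
      = Units.map (σ : K →* K) (f (permHom0 σ⁻¹ (EElt s₀ s))) * (f (EElt s₀ s))⁻¹ := by
    intro σ s
    rw [permHom0_EElt σ⁻¹ s₀ s (hs₀ σ⁻¹), fE, fE, key σ s]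
    apply Units.ext
    simp only [Units.val_mul, Units.coe_map, MonoidHom.coe_coe, map_mul, map_inv,
      Units.val_inv_eq_inv_val, mul_inv_rev, inv_inv]
    have h0 : ((σ : K ≃ₐ[F] K) (u s₀ : K)) = (u s₀ : K) := by
      have := hus₀ σ
      have := congrArg Units.val this
      simpa [Units.coe_map] using this
    rw [h0]
    field_simp
  refine ⟨f, fhom, ?_⟩
  intro σ x
  -- extend from basis elements to everything by additivity
  let Cadd : ↥(aug S).ker →+ Additive Kˣ :=
    AddMonoidHom.mk' (fun y => Additive.ofMul (c σ y))
      (by intro a b; beta_reduce; rw [hhom, ofMul_mul])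
  let Fadd : ↥(aug S).ker →+ Additive Kˣ := Uhom.comp (aug S).ker.subtype
  let mapAdd : Additive Kˣ →+ Additive Kˣ :=
    AddMonoidHom.mk' (fun a => Additive.ofMul (Units.map (σ : K →* K) (Additive.toMul a)))
      (by intro a b; beta_reduce; rw [toMul_add, map_mul, ofMul_mul])
  have base : ∀ s : S, Cadd (EElt s₀ s)
      = mapAdd (Fadd (permHom0 σ⁻¹ (EElt s₀ s))) - Fadd (EElt s₀ s) := by
    intro s
    show Additive.ofMul (c σ (EElt s₀ s))
        = Additive.ofMul (Units.map (σ : K →* K) (f (permHom0 σ⁻¹ (EElt s₀ s))))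
          - Additive.ofMul (f (EElt s₀ s))
    rw [← ofMul_div, div_eq_mul_inv]
    exact congrArg Additive.ofMul (hxE σ s)
  have hext : Cadd.comp (projP S s₀)
      = (mapAdd.comp (Fadd.comp ((permHom0 σ⁻¹).comp (projP S s₀))))
        - Fadd.comp (projP S s₀) := by
    apply Finsupp.addHom_ext
    intro s n
    show Cadd (projP S s₀ (Finsupp.single s n))
        = mapAdd (Fadd (permHom0 σ⁻¹ (projP S s₀ (Finsupp.single s n))))
          - Fadd (projP S s₀ (Finsupp.single s n))
    rw [projP_single]
    simp only [map_zsmul]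
    rw [← zsmul_sub, base s]
  have hx := DFunLike.congr_fun hext (x : S →₀ ℤ)
  have hrw : projP S s₀ (x : S →₀ ℤ) = x := projP_ker s₀ x
  rw [show (Cadd.comp (projP S s₀)) (x : S →₀ ℤ) = Cadd (projP S s₀ (x : S →₀ ℤ)) from rfl,
      show ((mapAdd.comp (Fadd.comp ((permHom0 σ⁻¹).comp (projP S s₀))))
          - Fadd.comp (projP S s₀)) (x : S →₀ ℤ)
        = mapAdd (Fadd (permHom0 σ⁻¹ (projP S s₀ (x : S →₀ ℤ))))
          - Fadd (projP S s₀ (x : S →₀ ℤ)) from rfl, hrw] at hx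
  have hx' : Additive.ofMul (c σ x)
      = Additive.ofMul (Units.map (σ : K →* K) (f (permHom0 σ⁻¹ x)))
        - Additive.ofMul (f x) := hx
  rw [← ofMul_div, div_eq_mul_inv] at hx'
  exact Additive.ofMul.injective hx'
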